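/- Over the field 𝔽₂, consider the vector space V with basis the eight symbols {x₁,z₂}, {x₂,z₁}, {y̌₁,ŷ₂}, {ŷ₁,y̌₂}, {z₁,z₂}, {x₁,x₂}, {y̌₁,y̌₂}, {ŷ₁,ŷ₂}, and the linear map d : V → V defined by d{x₁,z₂} = {ŷ₁,y̌₂} + {y̌₁,ŷ₂}, d{x₂,z₁} = {ŷ₁,y̌₂} + {y̌₁,ŷ₂}, d{y̌₁,ŷ₂} = {z₁,z₂}, d{ŷ₁,y̌₂} = {z₁,z₂}, and d = 0 on the remaining four basis elements. Then d ∘ d = 0, and the cohomology ker(d)/im(d) has dimension 4 over 𝔽₂, with basis represented by {x₁,x₂}, {x₂,z₁} + {x₁,z₂}, {y̌₁,y̌₂}, {ŷ₁,ŷ₂}. -/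

import Mathlib

/-!  The cochain complex (with `ħ = 1`, coefficients `𝔽₂`) of the left-handed Hopf link.
Basis indexing of the eight generators:
0 = {x₁,z₂}, 1 = {x₂,z₁}, 2 = {y̌₁,ŷ₂}, 3 = {ŷ₁,y̌₂}, 4 = {z₁,z₂},
5 = {x₁,x₂}, 6 = {y̌₁,y̌₂}, 7 = {ŷ₁,ŷ₂}.  -/

/-- The underlying `𝔽₂`-vector space with eight basis vectors. -/
abbrev HopfV : Type := Fin 8 → ZMod 2

/-- The `i`-th basis vector. -/
def hopfGen (i : Fin 8) : HopfV := Pi.single i 1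

/-- The differential of the left-handed Hopf link complex:
`d{x₁,z₂} = {ŷ₁,y̌₂} + {y̌₁,ŷ₂}`, `d{x₂,z₁} = {ŷ₁,y̌₂} + {y̌₁,ŷ₂}`,
`d{y̌₁,ŷ₂} = {z₁,z₂}`, `d{ŷ₁,y̌₂} = {z₁,z₂}`, `d = 0` otherwise. -/
noncomputable def hopfLeftD : HopfV →ₗ[ZMod 2] HopfV :=
  Matrix.toLin' (Matrix.of fun i j : Fin 8 =>
    if ((i : ℕ), (j : ℕ)) ∈ [(2, 0), (3, 0), (2, 1), (3, 1), (4, 2), (4, 3)] then 1 else 0)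

/-- The cohomology `ker d / im d` of the left-handed Hopf link complex. -/
noncomputable abbrev hopfLeftCohomology :=
  LinearMap.ker hopfLeftD ⧸
    Submodule.comap (LinearMap.ker hopfLeftD).subtype (LinearMap.range hopfLeftD)

lemma hopfLeftD_apply (v : HopfV) :
    hopfLeftD v = ![0, 0, v 0 + v 1, v 0 + v 1, v 2 + v 3, 0, 0, 0] := by
  funext i
  fin_cases i <;>
    simp (config := { decide := true }) [hopfLeftD, Matrix.toLin'_apply, Matrix.mulVec,
      dotProduct, Fin.sum_univ_eight] <;> rfl

lemma mem_ker_iff (v : HopfV) :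
    v ∈ LinearMap.ker hopfLeftD ↔ v 1 = v 0 ∧ v 3 = v 2 := by
  have key : ∀ a b : ZMod 2, a + b = 0 ↔ b = a := by decide
  rw [LinearMap.mem_ker, hopfLeftD_apply, funext_iff]
  constructor
  · intro h
    exact ⟨(key _ _).mp (h 2), (key _ _).mp (h 4)⟩
  · rintro ⟨h1, h2⟩ i
    fin_cases i <;> simp [h1, h2, key] <;> rfl

def hopfPhi : HopfV →ₗ[ZMod 2] (Fin 4 → ZMod 2) where
  toFun v := ![v 5, v 0, v 6, v 7]
  map_add' u v := by funext i; fin_cases i <;> rfl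
  map_smul' c v := by funext i; fin_cases i <;> rfl

noncomputable def hopfPsi : LinearMap.ker hopfLeftD →ₗ[ZMod 2] (Fin 4 → ZMod 2) :=
  hopfPhi ∘ₗ (LinearMap.ker hopfLeftD).subtype

lemma ker_psi :
    LinearMap.ker hopfPsi =
      Submodule.comap (LinearMap.ker hopfLeftD).subtype (LinearMap.range hopfLeftD) := by
  ext ⟨v, hv⟩
  rw [mem_ker_iff] at hv
  simp only [LinearMap.mem_ker, Submodule.mem_comap, Submodule.subtype_apply,
    LinearMap.mem_range, hopfPsi, LinearMap.comp_apply, Submodule.subtype_apply]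
  constructor
  · intro h
    have h' : ∀ i : Fin 4, hopfPhi v i = 0 := fun i => congrFun h i
    have h5 : v 5 = 0 := h' 0
    have h0 : v 0 = 0 := h' 1
    have h6 : v 6 = 0 := h' 2
    have h7 : v 7 = 0 := h' 3
    refine ⟨![v 2, 0, v 4, 0, 0, 0, 0, 0], ?_⟩
    rw [hopfLeftD_apply]
    funext i
    have h1 : v 1 = 0 := hv.1.trans h0
    fin_cases i <;>
      simp [h5, h0, h1, h6, h7, hv.2] <;> rfl
  · rintro ⟨w, rfl⟩
    rw [hopfLeftD_apply]
    funext i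
    fin_cases i <;> rfl

lemma psi_surj : Function.Surjective hopfPsi := by
  intro c
  have hm : (![c 1, c 1, 0, 0, 0, c 0, c 2, c 3] : HopfV) ∈ LinearMap.ker hopfLeftD := by
    rw [mem_ker_iff]; exact ⟨rfl, rfl⟩
  refine ⟨⟨_, hm⟩, ?_⟩
  funext i
  fin_cases i <;> rfl

noncomputable def hopfLift : hopfLeftCohomology →ₗ[ZMod 2] (Fin 4 → ZMod 2) :=
  Submodule.liftQ _ hopfPsi (le_of_eq ker_psi.symm)

lemma hopfLift_bij : Function.Bijective hopfLift := by
  constructor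
  · rw [← LinearMap.ker_eq_bot]
    exact Submodule.ker_liftQ_eq_bot _ _ _ (le_of_eq ker_psi)
  · intro c
    obtain ⟨x, hx⟩ := psi_surj c
    exact ⟨Submodule.Quotient.mk x, by rw [hopfLift, Submodule.liftQ_apply]; exact hx⟩

noncomputable def hopfE : hopfLeftCohomology ≃ₗ[ZMod 2] (Fin 4 → ZMod 2) :=
  LinearEquiv.ofBijective hopfLift hopfLift_bij

/-- `d ∘ d = 0`, the cohomology has dimension 4 over `𝔽₂`, and it has a basis
represented by `{x₁,x₂}`, `{x₂,z₁} + {x₁,z₂}`, `{y̌₁,y̌₂}`, `{ŷ₁,ŷ₂}`. -/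
theorem hopf_left_cohomology :
    hopfLeftD ∘ₗ hopfLeftD = 0 ∧
    Module.finrank (ZMod 2) hopfLeftCohomology = 4 ∧
    ∃ (hmem : ∀ i : Fin 4,
        (![hopfGen 5, hopfGen 1 + hopfGen 0, hopfGen 6, hopfGen 7] i) ∈
          LinearMap.ker hopfLeftD)
      (b : Module.Basis (Fin 4) (ZMod 2) hopfLeftCohomology),
      ∀ i : Fin 4, b i = Submodule.Quotient.mk
        ⟨![hopfGen 5, hopfGen 1 + hopfGen 0, hopfGen 6, hopfGen 7] i, hmem i⟩ := by
  have key : ∀ a : ZMod 2, a + a = 0 := by decide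
  refine ⟨?_, ?_, ?_⟩
  · apply LinearMap.ext
    intro v
    rw [LinearMap.comp_apply, hopfLeftD_apply v, hopfLeftD_apply]
    funext i
    fin_cases i <;> simp [key] <;> rfl
  · rw [hopfE.finrank_eq]
    simp [Module.finrank_fintype_fun_eq_card]
  · have hmem : ∀ i : Fin 4,
        (![hopfGen 5, hopfGen 1 + hopfGen 0, hopfGen 6, hopfGen 7] i) ∈
          LinearMap.ker hopfLeftD := by
      intro i
      fin_cases i <;> rw [mem_ker_iff] <;> constructor <;> decide
    refine ⟨hmem, Module.Basis.ofEquivFun hopfE, ?_⟩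
    intro i
    rw [Module.Basis.coe_ofEquivFun]
    simp only [LinearEquiv.symm_apply_eq, hopfE, LinearEquiv.ofBijective_apply,
      hopfLift, Submodule.liftQ_apply]
    funext j
    fin_cases i <;> fin_cases j <;>
      simp [hopfPsi, hopfPhi, hopfGen, Pi.single_apply]
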